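/- Let ν be a probability measure on [0,∞) admitting a moment of order k = |κ|, and for each p let ν_p be the unique rotation-invariant probability measure on ℝ^p whose radial part (pushforward under the Euclidean norm) is ν. If κ ∈ ℕ_0^p has all components even and |κ| = 2l, then m_κ(ν_p) = O(p^{-l}) as p → ∞; if some component of κ is odd, then m_κ(ν_p) = 0. -/

import Mathlib

open MeasureTheory

section RadialMomentAux
open Matrix

variable {p : ℕ}


-- star = transpose over ℝ
example (A : Matrix (Fin p) (Fin p) ℝ) : star A = Aᵀ := by
  ext i j; simp [Matrix.star_apply]

-- norm preservation
lemma aux_norm_pres (A : Matrix (Fin p) (Fin p) ℝ)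
    (hA : A ∈ Matrix.orthogonalGroup (Fin p) ℝ) (x : Fin p → ℝ) :
    ∑ i, (A.mulVec x i) ^ 2 = ∑ i, x i ^ 2 := by
  have hsA : star A = Aᵀ := by ext i j; simp [Matrix.star_apply]
  have h1 : Aᵀ * A = 1 := by
    rw [← hsA]; exact (Matrix.mem_orthogonalGroup_iff' (Fin p) ℝ).mp hA
  have key : (A.mulVec x) ⬝ᵥ (A.mulVec x) = x ⬝ᵥ x := by
    rw [Matrix.dotProduct_mulVec, ← Matrix.mulVec_transpose, Matrix.mulVec_mulVec, h1,
      Matrix.one_mulVec]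
  simpa [dotProduct, sq] using key


def flipM (i0 : Fin p) : Matrix (Fin p) (Fin p) ℝ :=
  Matrix.diagonal (fun i => if i = i0 then (-1 : ℝ) else 1)

lemma flipM_mem (i0 : Fin p) : flipM i0 ∈ Matrix.orthogonalGroup (Fin p) ℝ := by
  rw [Matrix.mem_orthogonalGroup_iff]
  have hs : star (flipM i0) = flipM i0 := by
    ext i j
    simp only [flipM, Matrix.star_apply, Matrix.diagonal_apply]
    split_ifs with h1 h2 h3 <;> simp_all <;> simp [h1] at h2 ⊢ <;> tauto
  rw [show (flipM i0)ᵀ = flipM i0 by rw [flipM, Matrix.diagonal_transpose], flipM, Matrix.diagonal_mul_diagonal]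
  have : (fun i => (if i = i0 then (-1:ℝ) else 1) * if i = i0 then -1 else 1)
      = fun _ => (1:ℝ) := by funext i; split_ifs <;> norm_num
  rw [this, Matrix.diagonal_one]

lemma flipM_mulVec (i0 : Fin p) (x : Fin p → ℝ) (i : Fin p) :
    (flipM i0).mulVec x i = if i = i0 then -x i else x i := by
  rw [flipM, Matrix.mulVec_diagonal]
  split_ifs <;> ring
lemma aux_meas_mulVec (A : Matrix (Fin p) (Fin p) ℝ) :
    Measurable (fun x : Fin p → ℝ => A.mulVec x) := by
  apply measurable_pi_lambda
  intro i
  simpa [Matrix.mulVec, dotProduct] using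
    Finset.measurable_sum (f := fun j (x : Fin p → ℝ) => A i j * x j) Finset.univ
      (fun j _ => measurable_const.mul (measurable_pi_apply j))

lemma aux_inv_integral (νp : Measure (Fin p → ℝ))
    (hinv : ∀ A : Matrix (Fin p) (Fin p) ℝ, A ∈ Matrix.orthogonalGroup (Fin p) ℝ →
        Measure.map (fun x => A.mulVec x) νp = νp)
    (A : Matrix (Fin p) (Fin p) ℝ) (hA : A ∈ Matrix.orthogonalGroup (Fin p) ℝ)
    (f : (Fin p → ℝ) → ℝ) (hf : AEStronglyMeasurable f νp) :
    ∫ x, f (A.mulVec x) ∂νp = ∫ x, f x ∂νp := by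
  conv_rhs => rw [← hinv A hA]
  rw [integral_map (aux_meas_mulVec A).aemeasurable]
  rw [hinv A hA]; exact hf

-- flip matrix
def permM (σ : Equiv.Perm (Fin p)) : Matrix (Fin p) (Fin p) ℝ :=
  Matrix.of fun i j => if j = σ i then 1 else 0

lemma permM_mulVec (σ : Equiv.Perm (Fin p)) (x : Fin p → ℝ) (i : Fin p) :
    (permM σ).mulVec x i = x (σ i) := by
  simp [permM, Matrix.mulVec, dotProduct]

lemma permM_mem (σ : Equiv.Perm (Fin p)) : permM σ ∈ Matrix.orthogonalGroup (Fin p) ℝ := by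
  rw [Matrix.mem_orthogonalGroup_iff]
  ext i k
  simp only [Matrix.mul_apply, Matrix.star_apply, Matrix.transpose_apply, permM, Matrix.of_apply, star_trivial]
  rw [Finset.sum_congr rfl (fun j _ => by
    rw [show ((if j = σ i then (1:ℝ) else 0) * if j = σ k then 1 else 0)
      = if j = σ i then (if j = σ k then 1 else 0) else 0 by split_ifs <;> ring])]
  rw [Finset.sum_ite_eq' Finset.univ (σ i)]
  simp [Matrix.one_apply, EmbeddingLike.apply_eq_iff_eq, eq_comm]
variable {p : ℕ}
noncomputable def rc : ℝ := (Real.sqrt 2)⁻¹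
lemma rc_sq : rc * rc = 1/2 := by
  rw [rc, ← mul_inv, Real.mul_self_sqrt (by norm_num)]; norm_num
noncomputable def rotM (a b : Fin p) : Matrix (Fin p) (Fin p) ℝ :=
  Matrix.of fun i j =>
    if i = a then (if j = a then rc else if j = b then rc else 0)
    else if i = b then (if j = a then rc else if j = b then -rc else 0)
    else if j = i then 1 else 0
lemma sum2 {a b : Fin p} (hab : a ≠ b) (u v : ℝ) (f : Fin p → ℝ)
    (hf : ∀ j, f j = (if j = a then u else 0) + (if j = b then v else 0)) :
    ∑ j, f j = u + v := by
  rw [Finset.sum_congr rfl (fun j _ => hf j), Finset.sum_add_distrib,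
    Finset.sum_ite_eq' Finset.univ a, Finset.sum_ite_eq' Finset.univ b]
  simp
lemma sum1 (c : Fin p) (u : ℝ) (f : Fin p → ℝ)
    (hf : ∀ j, f j = (if j = c then u else 0)) :
    ∑ j, f j = u := by
  rw [Finset.sum_congr rfl (fun j _ => hf j), Finset.sum_ite_eq' Finset.univ c]
  simp

lemma rotM_apply_a {a b : Fin p} (j : Fin p) :
    rotM a b a j = if j = a then rc else if j = b then rc else 0 := by
  simp [rotM]

lemma rotM_apply_b {a b : Fin p} (hab : a ≠ b) (j : Fin p) :
    rotM a b b j = if j = a then rc else if j = b then -rc else 0 := by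
  simp [rotM, Ne.symm hab]

lemma rotM_apply_other {a b i : Fin p} (hia : i ≠ a) (hib : i ≠ b) (j : Fin p) :
    rotM a b i j = if j = i then 1 else 0 := by
  simp only [rotM, Matrix.of_apply, if_neg hia, if_neg hib]

lemma rotM_row_a {a b : Fin p} (hab : a ≠ b) (k : Fin p) :
    ∑ j, rotM a b a j * rotM a b k j = rc * rotM a b k a + rc * rotM a b k b := by
  apply sum2 hab
  intro j
  rw [rotM_apply_a j]
  split_ifs with h1 h2 <;> simp_all <;> ring

lemma rotM_row_b {a b : Fin p} (hab : a ≠ b) (k : Fin p) :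
    ∑ j, rotM a b b j * rotM a b k j = rc * rotM a b k a + (-rc) * rotM a b k b := by
  apply sum2 hab
  intro j
  rw [rotM_apply_b hab j]
  split_ifs with h1 h2 <;> simp_all <;> ring

lemma rotM_row_other {a b i : Fin p} (hia : i ≠ a) (hib : i ≠ b) (k : Fin p) :
    ∑ j, rotM a b i j * rotM a b k j = rotM a b k i := by
  apply sum1 i
  intro j
  rw [rotM_apply_other hia hib j]
  split_ifs with h1 <;> simp_all

lemma rotM_mem {a b : Fin p} (hab : a ≠ b) : rotM a b ∈ Matrix.orthogonalGroup (Fin p) ℝ := by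
  rw [Matrix.mem_orthogonalGroup_iff]
  ext i k
  simp only [Matrix.mul_apply, Matrix.star_apply, Matrix.transpose_apply, star_trivial]
  have h2 := rc_sq
  have hba : b ≠ a := Ne.symm hab
  have eaa : rotM a b a a = rc := by rw [rotM_apply_a, if_pos rfl]
  have eab : rotM a b a b = rc := by rw [rotM_apply_a, if_neg hba, if_pos rfl]
  have eba : rotM a b b a = rc := by rw [rotM_apply_b hab, if_pos rfl]
  have ebb : rotM a b b b = -rc := by rw [rotM_apply_b hab, if_neg hba, if_pos rfl]
  have eka : ∀ m : Fin p, m ≠ a → m ≠ b → rotM a b m a = 0 := by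
    intro m h1 h3; rw [rotM_apply_other h1 h3, if_neg (Ne.symm h1)]
  have ekb : ∀ m : Fin p, m ≠ a → m ≠ b → rotM a b m b = 0 := by
    intro m h1 h3; rw [rotM_apply_other h1 h3, if_neg (Ne.symm h3)]
  rcases eq_or_ne i a with ria | ria
  · rw [ria, rotM_row_a hab k]
    rcases eq_or_ne k a with rka | rka
    · rw [rka, eaa, eab, Matrix.one_apply_eq]; linarith
    · rcases eq_or_ne k b with rkb | rkb
      · rw [rkb, eba, ebb, Matrix.one_apply_ne hab]; ring
      · rw [eka k rka rkb, ekb k rka rkb, Matrix.one_apply_ne (Ne.symm rka)]; ring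
  · rcases eq_or_ne i b with rib | rib
    · rw [rib, rotM_row_b hab k]
      rcases eq_or_ne k a with rka | rka
      · rw [rka, eaa, eab, Matrix.one_apply_ne hba]; ring
      · rcases eq_or_ne k b with rkb | rkb
        · rw [rkb, eba, ebb, Matrix.one_apply_eq]; linarith
        · rw [eka k rka rkb, ekb k rka rkb, Matrix.one_apply_ne (Ne.symm rkb)]; ring
    · rw [rotM_row_other ria rib k]
      rcases eq_or_ne k a with rka | rka
      · rw [rka, Matrix.one_apply_ne ria, rotM_apply_a, if_neg ria, if_neg rib]
      · rcases eq_or_ne k b with rkb | rkb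
        · rw [rkb, Matrix.one_apply_ne rib, rotM_apply_b hab, if_neg ria, if_neg rib]
        · rw [rotM_apply_other rka rkb, Matrix.one_apply]
lemma rotM_mulVec_a {a b : Fin p} (hab : a ≠ b) (x : Fin p → ℝ) :
    (rotM a b).mulVec x a = rc * (x a + x b) := by
  show (∑ j, rotM a b a j * x j) = _
  rw [sum2 hab (rc * x a) (rc * x b)]
  · ring
  · intro j
    simp only [rotM, Matrix.of_apply, if_pos rfl]
    split_ifs with h1 h2 <;> simp_all <;> ring

lemma rotM_mulVec_b {a b : Fin p} (hab : a ≠ b) (x : Fin p → ℝ) :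
    (rotM a b).mulVec x b = rc * (x a - x b) := by
  show (∑ j, rotM a b b j * x j) = _
  rw [sum2 hab (rc * x a) (-rc * x b)]
  · ring
  · intro j
    simp only [rotM, Matrix.of_apply, if_neg (Ne.symm hab), if_pos rfl]
    split_ifs with h1 h2 <;> simp_all <;> ring

lemma rotM_mulVec_other {a b : Fin p} (i : Fin p) (hia : i ≠ a) (hib : i ≠ b) (x : Fin p → ℝ) :
    (rotM a b).mulVec x i = x i := by
  show (∑ j, rotM a b i j * x j) = _
  rw [Finset.sum_congr rfl (fun j _ => by
    rw [show rotM a b i j * x j = if j = i then x j else 0 by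
      simp only [rotM, Matrix.of_apply, if_neg hia, if_neg hib]
      split_ifs <;> ring])]
  rw [Finset.sum_ite_eq' Finset.univ i]
  simp


def Rq (x : Fin p → ℝ) : ℝ := ∑ i, x i ^ 2

lemma Rq_nonneg (x : Fin p → ℝ) : 0 ≤ Rq x :=
  Finset.sum_nonneg fun i _ => sq_nonneg _

lemma continuous_Rq : Continuous (Rq (p := p)) := by
  unfold Rq
  exact continuous_finset_sum _ fun i _ => ((continuous_apply i).pow 2)

lemma abs_le_sqrt_Rq (x : Fin p → ℝ) (a : Fin p) : |x a| ≤ Real.sqrt (Rq x) := by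
  rw [show |x a| = Real.sqrt ((x a)^2) from (Real.sqrt_sq_eq_abs _).symm]
  apply Real.sqrt_le_sqrt
  exact Finset.single_le_sum (f := fun i => x i ^ 2) (fun i _ => sq_nonneg _) (Finset.mem_univ a)

lemma pair_bound {l : ℕ} (a b : Fin p) (r s k : ℕ) (h : r + s + 2 * k = 2 * l)
    (x : Fin p → ℝ) : |x a ^ r * x b ^ s * Rq x ^ k| ≤ Rq x ^ l := by
  have hk : k ≤ l := by omega
  have h0 : (0:ℝ) ≤ Real.sqrt (Rq x) := Real.sqrt_nonneg _
  calc |x a ^ r * x b ^ s * Rq x ^ k| = |x a| ^ r * |x b| ^ s * Rq x ^ k := by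
        rw [abs_mul, abs_mul, abs_pow, abs_pow, abs_of_nonneg (pow_nonneg (Rq_nonneg x) k)]
    _ ≤ Real.sqrt (Rq x) ^ r * Real.sqrt (Rq x) ^ s * Rq x ^ k := by
        have h1 : |x a| ^ r ≤ Real.sqrt (Rq x) ^ r :=
          pow_le_pow_left₀ (abs_nonneg _) (abs_le_sqrt_Rq x a) r
        have h2 : |x b| ^ s ≤ Real.sqrt (Rq x) ^ s :=
          pow_le_pow_left₀ (abs_nonneg _) (abs_le_sqrt_Rq x b) s
        exact mul_le_mul_of_nonneg_right
          (mul_le_mul h1 h2 (pow_nonneg (abs_nonneg _) _) (pow_nonneg h0 _))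
          (pow_nonneg (Rq_nonneg x) k)
    _ = Real.sqrt (Rq x) ^ (r + s) * Rq x ^ k := by rw [pow_add]
    _ = Rq x ^ (l - k) * Rq x ^ k := by
        rw [show r + s = 2 * (l - k) by omega, pow_mul, Real.sq_sqrt (Rq_nonneg x)]
    _ = Rq x ^ l := by rw [← pow_add]; congr 1; omega

lemma prod_bound {l : ℕ} (κ : Fin p → ℕ) (h : ∑ i, κ i = 2 * l) (x : Fin p → ℝ) :
    |∏ i, x i ^ κ i| ≤ Rq x ^ l := by
  calc |∏ i, x i ^ κ i| = ∏ i, |x i| ^ κ i := by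
        rw [Finset.abs_prod]; exact Finset.prod_congr rfl fun i _ => abs_pow _ _
    _ ≤ ∏ i, Real.sqrt (Rq x) ^ κ i := by
        apply Finset.prod_le_prod (fun i _ => pow_nonneg (abs_nonneg _) _)
        exact fun i _ => pow_le_pow_left₀ (abs_nonneg _) (abs_le_sqrt_Rq x i) _
    _ = Real.sqrt (Rq x) ^ (∑ i, κ i) := by rw [Finset.prod_pow_eq_pow_sum]
    _ = Rq x ^ l := by rw [h, pow_mul, Real.sq_sqrt (Rq_nonneg x)]

section
variable {l : ℕ} (νp : Measure (Fin p → ℝ)) [IsProbabilityMeasure νp] {ν : Measure ℝ}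

lemma integrable_Rq_pow (hmap : Measure.map (fun x : Fin p → ℝ => Real.sqrt (∑ i, x i ^ 2)) νp = ν)
    (hmom : Integrable (fun x => x ^ (2 * l)) ν) :
    Integrable (fun x => Rq x ^ l) νp := by
  rw [← hmap] at hmom
  have hn : Measurable (fun x : Fin p → ℝ => Real.sqrt (∑ i, x i ^ 2)) :=
    (continuous_Rq.sqrt).measurable
  have := (integrable_map_measure
    (by exact (continuous_pow (2*l)).aestronglyMeasurable) hn.aemeasurable).mp hmom
  convert this using 1
  funext x
  show Rq x ^ l = Real.sqrt (Rq x) ^ (2 * l)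
  rw [pow_mul, Real.sq_sqrt (Rq_nonneg x)]

lemma integral_Rq_pow (hmap : Measure.map (fun x : Fin p → ℝ => Real.sqrt (∑ i, x i ^ 2)) νp = ν) :
    ∫ x, Rq x ^ l ∂νp = ∫ t, t ^ (2 * l) ∂ν := by
  have hmeas : Measurable (fun x : Fin p → ℝ => Real.sqrt (∑ i, x i ^ 2)) :=
    (continuous_Rq.sqrt).measurable
  have h := integral_map (μ := νp) (φ := fun x : Fin p → ℝ => Real.sqrt (∑ i, x i ^ 2))
    hmeas.aemeasurable (f := fun t : ℝ => t ^ (2*l)) (continuous_pow (2*l)).aestronglyMeasurable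
  rw [← hmap, h]
  congr 1
  funext x
  show Rq x ^ l = Real.sqrt (Rq x) ^ (2 * l)
  rw [pow_mul, Real.sq_sqrt (Rq_nonneg x)]

lemma integrable_dominated (hmap : Measure.map (fun x : Fin p → ℝ => Real.sqrt (∑ i, x i ^ 2)) νp = ν)
    (hmom : Integrable (fun x => x ^ (2 * l)) ν)
    (f : (Fin p → ℝ) → ℝ) (hf : Continuous f) (hb : ∀ x, |f x| ≤ Rq x ^ l) :
    Integrable f νp := by
  apply Integrable.mono' (integrable_Rq_pow νp hmap hmom) hf.aestronglyMeasurable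
  exact Filter.Eventually.of_forall (fun x => by rw [Real.norm_eq_abs]; exact hb x)

end
section IG
variable {l : ℕ} {νp : Measure (Fin p → ℝ)}

lemma Rq_mulVec (A : Matrix (Fin p) (Fin p) ℝ) (hA : A ∈ Matrix.orthogonalGroup (Fin p) ℝ)
    (x : Fin p → ℝ) : Rq (A.mulVec x) = Rq x :=
  aux_norm_pres A hA x

noncomputable def Ig (νp : Measure (Fin p → ℝ)) (a b : Fin p) (r s k : ℕ) : ℝ :=
  ∫ x, x a ^ r * x b ^ s * Rq x ^ k ∂νp

lemma continuous_term (a b : Fin p) (r s k : ℕ) :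
    Continuous (fun x : Fin p → ℝ => x a ^ r * x b ^ s * Rq x ^ k) :=
  (((continuous_apply a).pow r).mul ((continuous_apply b).pow s)).mul (continuous_Rq.pow k)

lemma Ig_integrable (hR : Integrable (fun x => Rq x ^ l) νp) (a b : Fin p)
    (r s k : ℕ) (h : r + s + 2 * k = 2 * l) :
    Integrable (fun x : Fin p → ℝ => x a ^ r * x b ^ s * Rq x ^ k) νp :=
  Integrable.mono' hR (continuous_term a b r s k).aestronglyMeasurable
    (Filter.Eventually.of_forall fun x => by
      rw [Real.norm_eq_abs]; exact pair_bound a b r s k h x)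

lemma Ig_nonneg (a b : Fin p) {r s : ℕ} (k : ℕ) (hr : Even r) (hs : Even s) :
    0 ≤ Ig νp a b r s k :=
  integral_nonneg fun x => mul_nonneg (mul_nonneg (hr.pow_nonneg _) (hs.pow_nonneg _))
    (pow_nonneg (Rq_nonneg x) k)

variable (hinv : ∀ A : Matrix (Fin p) (Fin p) ℝ, A ∈ Matrix.orthogonalGroup (Fin p) ℝ →
        Measure.map (fun x => A.mulVec x) νp = νp)

include hinv

lemma Ig_perm (σ : Equiv.Perm (Fin p)) (a b : Fin p) (r s k : ℕ) :
    Ig νp a b r s k = Ig νp (σ a) (σ b) r s k := by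
  have h := aux_inv_integral νp hinv (permM σ) (permM_mem σ)
    (fun y => y a ^ r * y b ^ s * Rq y ^ k) (continuous_term a b r s k).aestronglyMeasurable
  calc Ig νp a b r s k
      = ∫ x, ((permM σ).mulVec x) a ^ r * ((permM σ).mulVec x) b ^ s
          * Rq ((permM σ).mulVec x) ^ k ∂νp := h.symm
    _ = Ig νp (σ a) (σ b) r s k := by
        apply integral_congr_ae
        filter_upwards with x
        rw [permM_mulVec, permM_mulVec, Rq_mulVec _ (permM_mem σ)]

lemma Ig_flip {a b : Fin p} (hab : a ≠ b) {r : ℕ} (hr : Odd r) (s k : ℕ) :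
    Ig νp a b r s k = 0 := by
  have h := aux_inv_integral νp hinv (flipM a) (flipM_mem a)
    (fun y => y a ^ r * y b ^ s * Rq y ^ k) (continuous_term a b r s k).aestronglyMeasurable
  have key : Ig νp a b r s k
      = ∫ x, -(x a ^ r * x b ^ s * Rq x ^ k) ∂νp := by
    calc Ig νp a b r s k
        = ∫ x, ((flipM a).mulVec x) a ^ r * ((flipM a).mulVec x) b ^ s
            * Rq ((flipM a).mulVec x) ^ k ∂νp := h.symm
      _ = _ := by
          apply integral_congr_ae
          filter_upwards with x
          rw [flipM_mulVec, flipM_mulVec, Rq_mulVec _ (flipM_mem a), if_pos rfl,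
            if_neg (Ne.symm hab), hr.neg_pow]
          ring
  rw [integral_neg] at key
  have : Ig νp a b r s k = - Ig νp a b r s k := key
  linarith

lemma Ig_comm (a b : Fin p) (r s k : ℕ) : Ig νp a b r s k = Ig νp b a s r k := by
  apply integral_congr_ae
  filter_upwards with x
  ring

lemma Ig_swap {a b : Fin p} (r s k : ℕ) :
    Ig νp a b r s k = Ig νp b a r s k := by
  have := Ig_perm hinv (Equiv.swap a b) a b r s k
  rwa [Equiv.swap_apply_left, Equiv.swap_apply_right] at this

lemma Ig_rot (hR : Integrable (fun x => Rq x ^ l) νp) {a b : Fin p} (hab : a ≠ b)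
    (j k : ℕ) (hjk : j + k = l) :
    Ig νp a b (2*j) 0 k
      = (1/2 : ℝ)^j * ∑ r ∈ Finset.range (2*j+1),
          ((2*j).choose r : ℝ) * Ig νp a b r (2*j - r) k := by
  have h := aux_inv_integral νp hinv (rotM a b) (rotM_mem hab)
    (fun y => y a ^ (2*j) * y b ^ 0 * Rq y ^ k)
    (continuous_term a b (2*j) 0 k).aestronglyMeasurable
  have key : ∀ x : Fin p → ℝ,
      ((rotM a b).mulVec x) a ^ (2*j) * ((rotM a b).mulVec x) b ^ 0
          * Rq ((rotM a b).mulVec x) ^ k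
      = ∑ r ∈ Finset.range (2*j+1),
          (1/2 : ℝ)^j * (((2*j).choose r : ℝ) * (x a ^ r * x b ^ (2*j - r) * Rq x ^ k)) := by
    intro x
    rw [rotM_mulVec_a hab, Rq_mulVec _ (rotM_mem hab), pow_zero, mul_one, mul_pow,
      show rc ^ (2*j) = (1/2 : ℝ)^j by rw [pow_mul, sq, rc_sq],
      add_pow, mul_assoc, Finset.sum_mul, Finset.mul_sum]
    apply Finset.sum_congr rfl
    intro r _
    push_cast
    ring
  have hint : ∀ r ∈ Finset.range (2*j+1), Integrable
      (fun x : Fin p → ℝ =>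
        (1/2 : ℝ)^j * (((2*j).choose r : ℝ) * (x a ^ r * x b ^ (2*j - r) * Rq x ^ k))) νp := by
    intro r hr
    apply Integrable.const_mul
    apply Integrable.const_mul
    apply Ig_integrable hR
    have : r ≤ 2*j := by
      have := Finset.mem_range.mp hr; omega
    omega
  calc Ig νp a b (2*j) 0 k
      = ∫ x, ((rotM a b).mulVec x) a ^ (2*j) * ((rotM a b).mulVec x) b ^ 0
          * Rq ((rotM a b).mulVec x) ^ k ∂νp := h.symm
    _ = ∫ x, ∑ r ∈ Finset.range (2*j+1),
          (1/2 : ℝ)^j * (((2*j).choose r : ℝ) * (x a ^ r * x b ^ (2*j - r) * Rq x ^ k)) ∂νp := by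
        apply integral_congr_ae; filter_upwards with x; exact key x
    _ = ∑ r ∈ Finset.range (2*j+1), ∫ x,
          (1/2 : ℝ)^j * (((2*j).choose r : ℝ) * (x a ^ r * x b ^ (2*j - r) * Rq x ^ k)) ∂νp :=
        integral_finset_sum _ hint
    _ = (1/2 : ℝ)^j * ∑ r ∈ Finset.range (2*j+1),
          ((2*j).choose r : ℝ) * Ig νp a b r (2*j - r) k := by
        rw [Finset.mul_sum]
        apply Finset.sum_congr rfl
        intro r _
        rw [MeasureTheory.integral_const_mul, MeasureTheory.integral_const_mul]
        rfl

end IG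
lemma uv_bound (u v : ℝ) (hu : 0 ≤ u) (hv : 0 ≤ v) (m j : ℕ) (h1 : 1 ≤ m) (h2 : m + 1 ≤ j) :
    u ^ m * v ^ (j - m) ≤ u ^ (j-1) * v + u * v ^ (j-1) := by
  rcases le_total u v with h | h
  · have key : u ^ m * v ^ (j - m) ≤ u * v ^ (j-1) := by
      calc u ^ m * v ^ (j - m) = u * (u ^ (m-1) * v ^ (j-m)) := by
            rw [← mul_assoc, ← pow_succ']
            congr 2
            omega
        _ ≤ u * (v ^ (m-1) * v ^ (j-m)) := by
            apply mul_le_mul_of_nonneg_left _ hu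
            exact mul_le_mul_of_nonneg_right (pow_le_pow_left₀ hu h _) (pow_nonneg hv _)
        _ = u * v ^ (j-1) := by rw [← pow_add]; congr 2; omega
    have h0 : 0 ≤ u ^ (j-1) * v := mul_nonneg (pow_nonneg hu _) hv
    linarith
  · have key : u ^ m * v ^ (j - m) ≤ u ^ (j-1) * v := by
      calc u ^ m * v ^ (j - m) = (u ^ m * v ^ (j-m-1)) * v := by
            rw [mul_assoc, ← pow_succ]
            congr 2
            omega
        _ ≤ (u ^ m * u ^ (j-m-1)) * v := by
            apply mul_le_mul_of_nonneg_right _ hv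
            exact mul_le_mul_of_nonneg_left (pow_le_pow_left₀ hv h _) (pow_nonneg hu _)
        _ = u ^ (j-1) * v := by rw [← pow_add]; congr 2; omega
    have h0 : 0 ≤ u * v ^ (j-1) := mul_nonneg hu (pow_nonneg hv _)
    linarith

section CHAIN
variable {l : ℕ} {νp : Measure (Fin p → ℝ)}
variable (hinv : ∀ A : Matrix (Fin p) (Fin p) ℝ, A ∈ Matrix.orthogonalGroup (Fin p) ℝ →
        Measure.map (fun x => A.mulVec x) νp = νp)
variable (hR : Integrable (fun x => Rq x ^ l) νp)

include hinv hR

lemma S_expand {a b : Fin p} (hab : a ≠ b) (j k : ℕ) (hd : (j+1) + k = l) :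
    Ig νp a b (2*j) 0 (k+1)
      = Ig νp a b (2*(j+1)) 0 k + ∑ i ∈ Finset.univ.erase a, Ig νp a i (2*j) 2 k := by
  have hint : ∀ i : Fin p, i ∈ (Finset.univ : Finset (Fin p)) → Integrable
      (fun x : Fin p → ℝ => x a ^ (2*j) * x i ^ 2 * Rq x ^ k) νp := by
    intro i _
    exact Ig_integrable hR a i (2*j) 2 k (by omega)
  calc Ig νp a b (2*j) 0 (k+1)
      = ∫ x, ∑ i, x a ^ (2*j) * x i ^ 2 * Rq x ^ k ∂νp := by
        apply integral_congr_ae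
        filter_upwards with x
        show x a ^ (2*j) * x b ^ 0 * Rq x ^ (k+1) = _
        rw [show x a ^ (2*j) * x b ^ 0 * Rq x ^ (k+1)
            = x a ^ (2*j) * Rq x ^ k * ∑ i, x i ^ 2 from by
          rw [show (∑ i, x i ^ 2) = Rq x from rfl]; ring]
        rw [Finset.mul_sum]
        apply Finset.sum_congr rfl
        intro i _
        ring
    _ = ∑ i, Ig νp a i (2*j) 2 k := integral_finset_sum _ hint
    _ = Ig νp a a (2*j) 2 k + ∑ i ∈ Finset.univ.erase a, Ig νp a i (2*j) 2 k :=
        (Finset.add_sum_erase _ _ (Finset.mem_univ a)).symm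
    _ = Ig νp a b (2*(j+1)) 0 k + ∑ i ∈ Finset.univ.erase a, Ig νp a i (2*j) 2 k := by
        congr 1
        apply integral_congr_ae
        filter_upwards with x
        show x a ^ (2*j) * x a ^ 2 * Rq x ^ k = x a ^ (2*(j+1)) * x b ^ 0 * Rq x ^ k
        ring

lemma S_erase_term {a b : Fin p} (hab : a ≠ b) {i : Fin p} (hia : i ≠ a) (j k : ℕ) :
    Ig νp a i (2*j) 2 k = Ig νp a b (2*j) 2 k := by
  by_cases hib : i = b
  · rw [hib]
  · have h := Ig_perm hinv (Equiv.swap i b) a i (2*j) 2 k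
    rwa [Equiv.swap_apply_left,
      Equiv.swap_apply_of_ne_of_ne (Ne.symm hia) hab] at h

lemma mixed_le {a b : Fin p} (hab : a ≠ b) (m j k : ℕ) (h1 : 1 ≤ m) (h2 : m + 1 ≤ j)
    (hjk : j + k = l) :
    Ig νp a b (2*m) (2*j - 2*m) k ≤ 2 * Ig νp a b (2*j-2) 2 k := by
  have hU' : Ig νp a b 2 (2*j-2) k = Ig νp a b (2*j-2) 2 k := by
    rw [Ig_comm hinv, Ig_swap hinv]
  have hmono : Ig νp a b (2*m) (2*j - 2*m) k
      ≤ Ig νp a b (2*j-2) 2 k + Ig νp a b 2 (2*j-2) k := by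
    have hint1 := Ig_integrable (νp := νp) hR a b (2*m) (2*j - 2*m) k (by omega)
    have hint2 := Ig_integrable (νp := νp) hR a b (2*j-2) 2 k (by omega)
    have hint3 := Ig_integrable (νp := νp) hR a b 2 (2*j-2) k (by omega)
    rw [show Ig νp a b (2*j-2) 2 k + Ig νp a b 2 (2*j-2) k
        = ∫ x, (x a ^ (2*j-2) * x b ^ 2 * Rq x ^ k + x a ^ 2 * x b ^ (2*j-2) * Rq x ^ k) ∂νp
        from (integral_add hint2 hint3).symm]
    apply integral_mono hint1 (hint2.add hint3)
    intro x
    show x a ^ (2*m) * x b ^ (2*j-2*m) * Rq x ^ k ≤ _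
    have hb := uv_bound (x a ^ 2) (x b ^ 2) (sq_nonneg _) (sq_nonneg _) m j h1 h2
    have e1 : (x a ^ 2) ^ m = x a ^ (2*m) := by rw [← pow_mul]
    have e2 : (x b ^ 2) ^ (j - m) = x b ^ (2*j - 2*m) := by rw [← pow_mul]; congr 1; omega
    have e3 : (x a ^ 2) ^ (j-1) = x a ^ (2*j-2) := by rw [← pow_mul]; congr 1; omega
    have e4 : (x b ^ 2) ^ (j-1) = x b ^ (2*j-2) := by rw [← pow_mul]; congr 1; omega
    rw [e1, e2, e3, e4] at hb
    have hRk : (0:ℝ) ≤ Rq x ^ k := pow_nonneg (Rq_nonneg x) k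
    calc x a ^ (2*m) * x b ^ (2*j-2*m) * Rq x ^ k
        ≤ (x a ^ (2*j-2) * x b ^ 2 + x a ^ 2 * x b ^ (2*j-2)) * Rq x ^ k :=
          mul_le_mul_of_nonneg_right hb hRk
      _ = x a ^ (2*j-2) * x b ^ 2 * Rq x ^ k + x a ^ 2 * x b ^ (2*j-2) * Rq x ^ k := by ring
  linarith [hU'.le, hU'.ge]

lemma S_le_U {a b : Fin p} (hab : a ≠ b) (j k : ℕ) (hj : 2 ≤ j) (hjk : j + k = l) :
    Ig νp a b (2*j) 0 k ≤ 4^l * Ig νp a b (2*j-2) 2 k := by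
  set S := Ig νp a b (2*j) 0 k with hS
  set U := Ig νp a b (2*j-2) 2 k with hU
  have hUnn : 0 ≤ U := Ig_nonneg a b k (by exact ⟨j-1, by omega⟩) (by exact ⟨1, rfl⟩)
  have hSnn : 0 ≤ S := Ig_nonneg a b k (⟨j, by omega⟩) (⟨0, rfl⟩)
  have hrot := Ig_rot hinv hR hab j k hjk
  -- multiply by 2^j
  have h2j : (2:ℝ)^j * S = ∑ r ∈ Finset.range (2*j+1),
      ((2*j).choose r : ℝ) * Ig νp a b r (2*j - r) k := by
    rw [hS, hrot, ← mul_assoc, ← mul_pow]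
    norm_num
  -- endpoints
  have hI2j : ((2*j).choose (2*j) : ℝ) * Ig νp a b (2*j) (2*j - 2*j) k = S := by
    rw [Nat.choose_self, Nat.sub_self, hS]
    norm_num
  have hI0 : ((2*j).choose 0 : ℝ) * Ig νp a b 0 (2*j - 0) k = S := by
    rw [Nat.choose_zero_right, hS]
    have : Ig νp a b 0 (2*j - 0) k = Ig νp a b (2*j) 0 k := by
      rw [Nat.sub_zero, Ig_comm hinv, Ig_swap hinv]
    rw [this]; norm_num
  -- split the sum
  have hmem2j : 2*j ∈ Finset.range (2*j+1) := Finset.mem_range.mpr (by omega)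
  have hmem0 : (0:ℕ) ∈ (Finset.range (2*j+1)).erase (2*j) :=
    Finset.mem_erase.mpr ⟨by omega, Finset.mem_range.mpr (by omega)⟩
  have hsplit : ∑ r ∈ Finset.range (2*j+1), ((2*j).choose r : ℝ) * Ig νp a b r (2*j - r) k
      = S + (S + ∑ r ∈ ((Finset.range (2*j+1)).erase (2*j)).erase 0,
          ((2*j).choose r : ℝ) * Ig νp a b r (2*j - r) k) := by
    rw [← Finset.add_sum_erase _ _ hmem2j, hI2j, ← Finset.add_sum_erase _ _ hmem0, hI0]
  -- bound interior terms
  have hterm : ∀ r ∈ ((Finset.range (2*j+1)).erase (2*j)).erase 0,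
      ((2*j).choose r : ℝ) * Ig νp a b r (2*j - r) k ≤ ((2*j).choose r : ℝ) * (2 * U) := by
    intro r hr
    have hr0 : r ≠ 0 := (Finset.mem_erase.mp hr).1
    have hr2j : r ≠ 2*j := (Finset.mem_erase.mp (Finset.mem_erase.mp hr).2).1
    have hrlt : r < 2*j+1 := Finset.mem_range.mp (Finset.mem_erase.mp (Finset.mem_erase.mp hr).2).2
    apply mul_le_mul_of_nonneg_left _ (Nat.cast_nonneg _)
    rcases Nat.even_or_odd r with he | ho
    · obtain ⟨m, hm⟩ := he
      have h1m : 1 ≤ m := by omega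
      have h2m : m + 1 ≤ j := by omega
      have := mixed_le hinv hR hab m j k h1m h2m hjk
      rw [show 2*m = r by omega] at this
      exact this
    · rw [Ig_flip hinv hab ho]
      positivity
  have hsum_le : ∑ r ∈ ((Finset.range (2*j+1)).erase (2*j)).erase 0,
      ((2*j).choose r : ℝ) * Ig νp a b r (2*j - r) k ≤ (4:ℝ)^j * (2*U) := by
    calc _ ≤ ∑ r ∈ ((Finset.range (2*j+1)).erase (2*j)).erase 0,
        ((2*j).choose r : ℝ) * (2*U) := Finset.sum_le_sum hterm
      _ ≤ ∑ r ∈ Finset.range (2*j+1), ((2*j).choose r : ℝ) * (2*U) := by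
          apply Finset.sum_le_sum_of_subset_of_nonneg
          · intro r hr
            exact Finset.mem_of_mem_erase (Finset.mem_of_mem_erase hr)
          · intro r _ _
            positivity
      _ = (4:ℝ)^j * (2*U) := by
          rw [← Finset.sum_mul]
          congr 1
          rw [← Nat.cast_sum, Nat.sum_range_choose]
          push_cast
          rw [show (4:ℝ) = 2^2 by norm_num, ← pow_mul]
  -- combine
  have hkey : ((2:ℝ)^j - 2) * S ≤ 2 * 4^j * U := by
    have := h2j.trans_le (by rw [hsplit]; linarith [hsum_le] : _ ≤ S + (S + 4^j * (2*U)))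
    nlinarith
  have h2big : (2:ℝ) ≤ (2:ℝ)^j - 2 := by
    have : (4:ℝ) ≤ 2^j := by
      calc (4:ℝ) = 2^2 := by norm_num
        _ ≤ 2^j := pow_le_pow_right₀ (by norm_num) hj
    linarith
  have h4jl : (4:ℝ)^j ≤ 4^l := pow_le_pow_right₀ (by norm_num) (by omega)
  have step2 : 2 * 4^j * U ≤ ((2:ℝ)^j - 2) * (4^l * U) := by
    calc 2 * 4^j * U = 2 * (4^j * U) := by ring
      _ ≤ ((2:ℝ)^j - 2) * (4^l * U) :=
          mul_le_mul h2big (mul_le_mul_of_nonneg_right h4jl hUnn)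
            (mul_nonneg (by positivity) hUnn) (by linarith)
  have := hkey.trans step2
  exact le_of_mul_le_mul_left this (by linarith)

lemma step_ineq {a b : Fin p} (hab : a ≠ b) (hp1 : 1 ≤ p) (j k : ℕ) (hd : (j+1) + k = l) :
    ((p:ℝ) - 1) * Ig νp a b (2*(j+1)) 0 k ≤ 4^l * Ig νp a b (2*j) 0 (k+1) := by
  have hpnn : (0:ℝ) ≤ (p:ℝ) - 1 := by
    have : (1:ℝ) ≤ (p:ℝ) := by exact_mod_cast hp1
    linarith
  have h4nn : (0:ℝ) ≤ (4:ℝ)^l := by positivity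
  have h41 : (1:ℝ) ≤ (4:ℝ)^l := one_le_pow₀ (by norm_num)
  have hexp := S_expand hinv hR hab j k hd
  have hterms : ∑ i ∈ Finset.univ.erase a, Ig νp a i (2*j) 2 k
      = ((p:ℝ) - 1) * Ig νp a b (2*j) 2 k := by
    rw [Finset.sum_congr rfl
      (fun i hi => S_erase_term hinv hR hab (Finset.mem_erase.mp hi).1 j k)]
    rw [Finset.sum_const, Finset.card_erase_of_mem (Finset.mem_univ a), Finset.card_univ,
      Fintype.card_fin, nsmul_eq_mul, Nat.cast_sub hp1, Nat.cast_one]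
  have hUnn : 0 ≤ Ig νp a b (2*j) 2 k := Ig_nonneg a b k ⟨j, by omega⟩ ⟨1, rfl⟩
  have hS1nn : 0 ≤ Ig νp a b (2*(j+1)) 0 k := Ig_nonneg a b k ⟨j+1, by omega⟩ ⟨0, rfl⟩
  have hexp' : Ig νp a b (2*j) 0 (k+1)
      = Ig νp a b (2*(j+1)) 0 k + ((p:ℝ)-1) * Ig νp a b (2*j) 2 k := by
    rw [hexp, hterms]
  rcases Nat.eq_zero_or_pos j with rfl | hj
  · have hUS : Ig νp (p := p) a b (2*0) 2 k = Ig νp a b (2*(0+1)) 0 k := by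
      rw [show 2*0 = 0 from rfl, show 2*(0+1) = 2 from rfl, Ig_comm hinv, Ig_swap hinv]
    rw [hexp', hUS]
    nlinarith [mul_nonneg (mul_nonneg hpnn hS1nn) (by linarith : (0:ℝ) ≤ 4^l - 1),
      mul_nonneg h4nn hS1nn]
  · have hSU := S_le_U hinv hR hab (j+1) k (by omega) hd
    rw [show 2*(j+1)-2 = 2*j by omega] at hSU
    rw [hexp']
    have hmul := mul_le_mul_of_nonneg_left hSU hpnn
    nlinarith [mul_nonneg h4nn hS1nn]

lemma chain_ineq {a b : Fin p} (hab : a ≠ b) (hp1 : 1 ≤ p) :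
    ∀ j, j ≤ l → ((p:ℝ)-1)^j * Ig νp a b (2*j) 0 (l-j)
      ≤ ((4:ℝ)^l)^j * Ig νp a b 0 0 l := by
  have hpnn : (0:ℝ) ≤ (p:ℝ) - 1 := by
    have : (1:ℝ) ≤ (p:ℝ) := by exact_mod_cast hp1
    linarith
  intro j
  induction j with
  | zero => intro _; norm_num
  | succ j ih =>
    intro hjl
    have ihe := ih (by omega)
    have hstep := step_ineq hinv hR hab hp1 j (l-j-1) (by omega)
    rw [show l-j-1+1 = l-j by omega] at hstep
    calc ((p:ℝ)-1)^(j+1) * Ig νp a b (2*(j+1)) 0 (l-(j+1))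
        = ((p:ℝ)-1)^j * (((p:ℝ)-1) * Ig νp a b (2*(j+1)) 0 (l-j-1)) := by
          rw [show l-(j+1) = l-j-1 by omega]; ring
      _ ≤ ((p:ℝ)-1)^j * (4^l * Ig νp a b (2*j) 0 (l-j)) :=
          mul_le_mul_of_nonneg_left hstep (pow_nonneg hpnn j)
      _ = 4^l * (((p:ℝ)-1)^j * Ig νp a b (2*j) 0 (l-j)) := by ring
      _ ≤ 4^l * (((4:ℝ)^l)^j * Ig νp a b 0 0 l) :=
          mul_le_mul_of_nonneg_left ihe (by positivity)
      _ = ((4:ℝ)^l)^(j+1) * Ig νp a b 0 0 l := by ring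
end CHAIN
section HOLDER
variable {l : ℕ} {νp : Measure (Fin p → ℝ)}
variable (hinv : ∀ A : Matrix (Fin p) (Fin p) ℝ, A ∈ Matrix.orthogonalGroup (Fin p) ℝ →
        Measure.map (fun x => A.mulVec x) νp = νp)
variable (hR : Integrable (fun x => Rq x ^ l) νp)

lemma Ig_snd_zero (a c c' : Fin p) (r k : ℕ) :
    Ig νp a c r 0 k = Ig νp a c' r 0 k := by
  apply integral_congr_ae; filter_upwards with x; rw [pow_zero, pow_zero]

include hinv hR in
lemma holder_red (κ : Fin p → ℕ) (hκe : ∀ i, Even (κ i)) (hκs : ∑ i, κ i = 2*l)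
    (hl : 1 ≤ l) {a b : Fin p} (hab : a ≠ b) :
    ∫ x, ∏ i, x i ^ κ i ∂νp ≤ Ig νp a b (2*l) 0 0 := by
  classical
  set T := Ig νp a b (2*l) 0 0 with hT
  have hTnn : 0 ≤ T := Ig_nonneg a b 0 ⟨l, by omega⟩ ⟨0, rfl⟩
  have h2l : (2*l : ℝ) ≠ 0 := by positivity
  set s : Finset (Fin p) := Finset.univ.filter (fun i => κ i ≠ 0) with hs
  have hssum : ∑ i ∈ s, κ i = 2*l := by
    rw [hs, Finset.sum_filter_ne_zero, hκs]
  have hsne : s.Nonempty := by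
    by_contra hc
    rw [Finset.not_nonempty_iff_eq_empty] at hc
    rw [hc, Finset.sum_empty] at hssum
    omega
  set q : Fin p → ℝ := fun i => (κ i : ℝ) / (2*l) with hq
  have hqsum : ∑ i ∈ s, q i = 1 := by
    rw [hq, ← Finset.sum_div]
    rw [show ∑ i ∈ s, (κ i : ℝ) = ((2*l : ℕ) : ℝ) by rw [← hssum]; push_cast; ring]
    push_cast
    field_simp
  have hqnn : ∀ i ∈ s, 0 ≤ q i := fun i _ => by positivity
  have hqpos : ∀ i ∈ s, 0 < q i := by
    intro i hi
    have : κ i ≠ 0 := (Finset.mem_filter.mp hi).2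
    have : 0 < (κ i : ℝ) := by positivity
    positivity
  -- integrability of the product
  have hprod_int : Integrable (fun x : Fin p → ℝ => ∏ i, x i ^ κ i) νp := by
    apply Integrable.mono' hR
    · exact (continuous_finset_prod _ fun i _ => (continuous_apply i).pow (κ i)).aestronglyMeasurable
    · exact Filter.Eventually.of_forall fun x => by
        rw [Real.norm_eq_abs]; exact prod_bound κ hκs x
  have hprod_nn : ∀ x : Fin p → ℝ, 0 ≤ ∏ i, x i ^ κ i := fun x =>
    Finset.prod_nonneg fun i _ => (hκe i).pow_nonneg _
  set m := ∫ x, ∏ i, x i ^ κ i ∂νp with hm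
  -- ENNReal computation
  set f : Fin p → (Fin p → ℝ) → ENNReal := fun i x => ENNReal.ofReal (x i ^ (2*l)) with hf
  have hfmeas : ∀ i ∈ s, AEMeasurable (f i) νp := fun i _ =>
    (ENNReal.measurable_ofReal.comp ((measurable_pi_apply i).pow_const (2*l))).aemeasurable
  have hptwise : ∀ x : Fin p → ℝ,
      ENNReal.ofReal (∏ i, x i ^ κ i) = ∏ i ∈ s, f i x ^ q i := by
    intro x
    have h1 : (∏ i, x i ^ κ i) = ∏ i ∈ s, x i ^ κ i := by
      refine (Finset.prod_subset (Finset.subset_univ s) ?_).symm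
      intro i _ hnot
      rw [hs, Finset.mem_filter] at hnot
      push_neg at hnot
      rw [hnot (Finset.mem_univ i), pow_zero]
    have h2 : ∀ i, f i x ^ q i = ENNReal.ofReal (|x i| ^ κ i) := by
      intro i
      have e0 : x i ^ (2*l) = |x i| ^ (2*l) := ((Even.pow_abs ⟨l, by omega⟩) (x i)).symm
      rw [hf]
      show (ENNReal.ofReal (x i ^ (2*l))) ^ q i = _
      rw [e0, ENNReal.ofReal_pow (abs_nonneg _), ← ENNReal.rpow_natCast _ (2*l),
        ← ENNReal.rpow_mul]
      rw [show ((2*l : ℕ) : ℝ) * q i = (κ i : ℝ) by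
        rw [hq]; push_cast; field_simp]
      rw [ENNReal.rpow_natCast, ← ENNReal.ofReal_pow (abs_nonneg _)]
    rw [h1, Finset.prod_congr rfl (fun i _ => h2 i),
      ← ENNReal.ofReal_prod_of_nonneg (fun i _ => pow_nonneg (abs_nonneg _) _)]
    congr 1
    exact Finset.prod_congr rfl fun i _ => by rw [(hκe i).pow_abs]
  -- each coordinate has the same 2l-th moment
  have hcoord : ∀ i : Fin p, ∫ x, x i ^ (2*l) ∂νp = T := by
    intro i
    have e1 : ∫ x, x i ^ (2*l) ∂νp = Ig νp i b (2*l) 0 0 := by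
      apply integral_congr_ae; filter_upwards with x
      rw [pow_zero, pow_zero]; ring
    rw [e1, Ig_perm hinv (Equiv.swap i a) i b (2*l) 0 0, Equiv.swap_apply_left, hT]
    exact Ig_snd_zero a _ b (2*l) 0
  have hcoord_int : ∀ i : Fin p, Integrable (fun x : Fin p → ℝ => x i ^ (2*l)) νp := by
    intro i
    have := Ig_integrable (νp := νp) hR i b (2*l) 0 0 (by omega)
    apply this.congr
    filter_upwards with x
    rw [pow_zero, pow_zero]; ring
  have hlint : ∀ i : Fin p, ∫⁻ x, f i x ∂νp = ENNReal.ofReal T := by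
    intro i
    rw [hf]
    have hev : Even (2*l) := ⟨l, by omega⟩
    rw [← ofReal_integral_eq_lintegral_ofReal (hcoord_int i)
      (Filter.Eventually.of_forall fun x => hev.pow_nonneg _)]
    rw [hcoord i]
  have hmain : ENNReal.ofReal m ≤ ∏ i ∈ s, (ENNReal.ofReal T) ^ q i := by
    calc ENNReal.ofReal m = ∫⁻ x, ENNReal.ofReal (∏ i, x i ^ κ i) ∂νp :=
          ofReal_integral_eq_lintegral_ofReal hprod_int
            (Filter.Eventually.of_forall hprod_nn)
      _ = ∫⁻ x, ∏ i ∈ s, f i x ^ q i ∂νp := by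
          apply lintegral_congr_ae; filter_upwards with x; exact hptwise x
      _ ≤ ∏ i ∈ s, (∫⁻ x, f i x ∂νp) ^ q i :=
          ENNReal.lintegral_prod_norm_pow_le s hfmeas hqsum hqnn
      _ = ∏ i ∈ s, (ENNReal.ofReal T) ^ q i := by
          exact Finset.prod_congr rfl fun i _ => by rw [hlint i]
  rcases eq_or_lt_of_le hTnn with hT0 | hTpos
  · obtain ⟨i0, hi0⟩ := hsne
    rw [Finset.prod_eq_zero hi0 (by
      rw [← hT0, ENNReal.ofReal_zero, ENNReal.zero_rpow_of_pos (hqpos i0 hi0)])] at hmain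
    have h0 : ENNReal.ofReal m = 0 := le_antisymm hmain (by positivity)
    rw [ENNReal.ofReal_eq_zero] at h0
    linarith
  · have heq : ∏ i ∈ s, (ENNReal.ofReal T) ^ q i = ENNReal.ofReal T := by
      calc ∏ i ∈ s, (ENNReal.ofReal T) ^ q i = ∏ i ∈ s, ENNReal.ofReal (T ^ q i) :=
            Finset.prod_congr rfl fun i _ => ENNReal.ofReal_rpow_of_pos hTpos
        _ = ENNReal.ofReal (∏ i ∈ s, T ^ q i) :=
            (ENNReal.ofReal_prod_of_nonneg fun i _ => Real.rpow_nonneg hTnn _).symm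
        _ = ENNReal.ofReal (T ^ (∑ i ∈ s, q i)) := by
            rw [Real.rpow_sum_of_pos hTpos]
        _ = ENNReal.ofReal T := by rw [hqsum, Real.rpow_one]
    rw [heq] at hmain
    exact (ENNReal.ofReal_le_ofReal_iff hTnn).mp hmain
end HOLDER

end RadialMomentAux

/-- Moments of the radial probability measure `ν_p` on `ℝ^p` with radial part
`ν ∈ M^1([0,∞))`: if `κ` has all components even with `|κ| = 2l` then
`m_κ(ν_p) = O(p^{-l})` as `p → ∞` (uniformly: `|m_κ(ν_p)| ≤ C / p^l`), and if
some component of `κ` is odd then `m_κ(ν_p) = 0`.  The measure `ν_p` is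
characterized as the unique rotation-invariant probability measure on `ℝ^p`
whose pushforward under the Euclidean norm is `ν`. -/
theorem radial_measure_moment_asymptotics (l : ℕ) (ν : Measure ℝ)
    [IsProbabilityMeasure ν] (hsupp : ν {x | x < 0} = 0)
    (hmom : Integrable (fun x => x ^ (2 * l)) ν) :
    (∃ C : ℝ, ∀ p : ℕ, 0 < p →
      ∀ νp : Measure (Fin p → ℝ), IsProbabilityMeasure νp →
      (∀ A : Matrix (Fin p) (Fin p) ℝ, A ∈ Matrix.orthogonalGroup (Fin p) ℝ →
        Measure.map (fun x => A.mulVec x) νp = νp) →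
      Measure.map (fun x => Real.sqrt (∑ i, x i ^ 2)) νp = ν →
      ∀ κ : Fin p → ℕ, (∀ i, Even (κ i)) → (∑ i, κ i) = 2 * l →
        |∫ x, ∏ i, x i ^ κ i ∂νp| ≤ C / (p : ℝ) ^ l) ∧
    (∀ p : ℕ, 0 < p →
      ∀ νp : Measure (Fin p → ℝ), IsProbabilityMeasure νp →
      (∀ A : Matrix (Fin p) (Fin p) ℝ, A ∈ Matrix.orthogonalGroup (Fin p) ℝ →
        Measure.map (fun x => A.mulVec x) νp = νp) →
      Measure.map (fun x => Real.sqrt (∑ i, x i ^ 2)) νp = ν →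
      ∀ κ : Fin p → ℕ, Integrable (fun x => ∏ i, x i ^ κ i) νp →
        (∃ i, Odd (κ i)) →
        ∫ x, ∏ i, x i ^ κ i ∂νp = 0) := by
  constructor
  · -- even case : O(p^{-l}) bound
    refine ⟨(2:ℝ)^l * 4^(l*l) * ∫ t, t^(2*l) ∂ν, ?_⟩
    intro p hp νp hprob hinv hmap κ hκe hκs
    haveI := hprob
    have hev2l : Even (2*l) := ⟨l, by omega⟩
    have hMnn : 0 ≤ ∫ t, t^(2*l) ∂ν :=
      integral_nonneg fun t => hev2l.pow_nonneg _
    have hR : Integrable (fun x : Fin p → ℝ => Rq x ^ l) νp := integrable_Rq_pow νp hmap hmom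
    have hIRq : ∫ x, Rq x ^ l ∂νp = ∫ t, t^(2*l) ∂ν := integral_Rq_pow νp hmap
    have hmnn : 0 ≤ ∫ x, ∏ i, x i ^ κ i ∂νp :=
      integral_nonneg fun x => Finset.prod_nonneg fun i _ => (hκe i).pow_nonneg _
    rw [abs_of_nonneg hmnn]
    have hppos : (0:ℝ) < (p:ℝ)^l := by positivity
    rw [le_div_iff₀ hppos]
    rcases Nat.eq_zero_or_pos l with rfl | hl
    · -- l = 0
      have hκ0 : ∀ i ∈ Finset.univ, κ i = 0 :=
        (Finset.sum_eq_zero_iff).mp (by simpa using hκs)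
      have h1 : ∫ x, ∏ i, x i ^ κ i ∂νp = 1 := by
        rw [show (fun x : Fin p → ℝ => ∏ i, x i ^ κ i) = fun _ => (1:ℝ) from
          funext fun x => Finset.prod_eq_one fun i hi => by rw [hκ0 i hi, pow_zero]]
        simp
      have h2 : ∫ t, t^(2*0) ∂ν = 1 := by
        rw [show (fun t : ℝ => t^(2*0)) = fun _ => (1:ℝ) from funext fun t => by norm_num]
        simp
      rw [h1, h2]
      norm_num
    · rcases (by omega : p = 1 ∨ 2 ≤ p) with rfl | hp2
      · -- p = 1
        have h1 : ∫ x : Fin 1 → ℝ, ∏ i, x i ^ κ i ∂νp = ∫ x, Rq x ^ l ∂νp := by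
          apply integral_congr_ae; filter_upwards with x
          rw [Fin.prod_univ_one, show κ 0 = 2*l by rw [← hκs, Fin.sum_univ_one],
            show Rq x = x 0 ^ 2 from Fin.sum_univ_one _, ← pow_mul]
        rw [h1, hIRq]
        have hc1 : (1:ℝ) ≤ 2^l * 4^(l*l) := by
          have : (1:ℝ) ≤ 2^l := one_le_pow₀ (by norm_num)
          have : (1:ℝ) ≤ 4^(l*l) := one_le_pow₀ (by norm_num)
          nlinarith
        have : ((1:ℕ):ℝ)^l = 1 := by norm_num
        rw [this, mul_one]
        nlinarith
      · -- main case p ≥ 2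
        set a : Fin p := ⟨0, by omega⟩ with ha
        set b : Fin p := ⟨1, by omega⟩ with hb
        have hab : a ≠ b := by
          rw [ha, hb]
          exact Fin.ne_of_val_ne (by norm_num)
        have hm_le_T := holder_red hinv hR κ hκe hκs hl hab
        have hchain := chain_ineq hinv hR hab (by omega) l le_rfl
        rw [Nat.sub_self] at hchain
        have hMeq : Ig νp a b 0 0 l = ∫ t, t^(2*l) ∂ν := by
          rw [show Ig νp a b 0 0 l = ∫ x, Rq x ^ l ∂νp from
            integral_congr_ae (by filter_upwards with x; rw [pow_zero, pow_zero]; ring), hIRq]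
        rw [hMeq, ← pow_mul] at hchain
        have hTnn : 0 ≤ Ig νp a b (2*l) 0 0 := Ig_nonneg a b 0 ⟨l, by omega⟩ ⟨0, rfl⟩
        have hple : ((p:ℝ))^l ≤ 2^l * ((p:ℝ)-1)^l := by
          rw [← mul_pow]
          apply pow_le_pow_left₀ (Nat.cast_nonneg p)
          have : (2:ℝ) ≤ (p:ℝ) := by exact_mod_cast hp2
          linarith
        calc (∫ x, ∏ i, x i ^ κ i ∂νp) * (p:ℝ)^l
            ≤ Ig νp a b (2*l) 0 0 * (p:ℝ)^l :=
              mul_le_mul_of_nonneg_right hm_le_T (le_of_lt hppos)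
          _ ≤ Ig νp a b (2*l) 0 0 * (2^l * ((p:ℝ)-1)^l) :=
              mul_le_mul_of_nonneg_left hple hTnn
          _ = 2^l * (((p:ℝ)-1)^l * Ig νp a b (2*l) 0 0) := by ring
          _ ≤ 2^l * (4^(l*l) * ∫ t, t^(2*l) ∂ν) :=
              mul_le_mul_of_nonneg_left hchain (by positivity)
          _ = 2^l * 4^(l*l) * ∫ t, t^(2*l) ∂ν := by ring
  · -- odd case : moment vanishes
    intro p hp νp hprob hinv hmap κ hint ⟨i0, hodd⟩
    have h := aux_inv_integral νp hinv (flipM i0) (flipM_mem i0)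
      (fun y => ∏ i, y i ^ κ i) hint.aestronglyMeasurable
    have key : ∫ x, ∏ i, x i ^ κ i ∂νp = ∫ x, -(∏ i, x i ^ κ i) ∂νp := by
      calc ∫ x, ∏ i, x i ^ κ i ∂νp
          = ∫ x, ∏ i, ((flipM i0).mulVec x) i ^ κ i ∂νp := h.symm
        _ = ∫ x, -(∏ i, x i ^ κ i) ∂νp := by
            apply integral_congr_ae
            filter_upwards with x
            rw [← Finset.prod_erase_mul _ _ (Finset.mem_univ i0),
              ← Finset.prod_erase_mul _ (fun i => x i ^ κ i) (Finset.mem_univ i0)]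
            have h1 : ∏ i ∈ Finset.univ.erase i0, ((flipM i0).mulVec x) i ^ κ i
                = ∏ i ∈ Finset.univ.erase i0, x i ^ κ i := by
              apply Finset.prod_congr rfl
              intro i hi
              rw [flipM_mulVec, if_neg (Finset.mem_erase.mp hi).1]
            rw [h1, flipM_mulVec, if_pos rfl, hodd.neg_pow]
            ring
    rw [integral_neg] at key
    linarith
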